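/- Let d ≥ n ≥ k ≥ 1, let φ₁,…,φ_n be orthonormal vectors in ℂ^d, and let |Φ_n⟩ := |φ₁⟩∧⋯∧|φ_n⟩ be the corresponding Slater determinant state. Then the quantum entropy of the reduced state of k particles equals H(tr_{n→k}[|Φ_n⟩⟨Φ_n|]) = log C(n,k). -/

import Mathlib

open scoped BigOperators Matrix Kronecker ComplexOrder
open Matrix

noncomputable section

variable {ι : Type*} [Fintype ι] [DecidableEq ι]

/-- Apply a real-scalar function to a Hermitian matrix via the spectral decomposition
(junk value `0` on non-Hermitian matrices). -/
def hermFun (f : ℝ → ℂ) (A : Matrix ι ι ℂ) : Matrix ι ι ℂ :=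
  if hA : A.IsHermitian then
    (hA.eigenvectorUnitary : Matrix ι ι ℂ) * Matrix.diagonal (fun i => f (hA.eigenvalues i)) *
      (star (hA.eigenvectorUnitary : Matrix ι ι ℂ))
  else 0

/-- Matrix logarithm (on the support; natural logarithm). -/
def matLog (A : Matrix ι ι ℂ) : Matrix ι ι ℂ := hermFun (fun x => (Real.log x : ℂ)) A

/-- Matrix square root of a Hermitian (e.g. positive semidefinite) matrix. -/
def matSqrt (A : Matrix ι ι ℂ) : Matrix ι ι ℂ := hermFun (fun x => (Real.sqrt x : ℂ)) A

/-- Complex matrix power with the Moore–Penrose convention (inverse powers taken on the support). -/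
def matCPow (A : Matrix ι ι ℂ) (z : ℂ) : Matrix ι ι ℂ :=
  hermFun (fun x => if x = 0 then 0 else (x : ℂ) ^ z) A

/-- A state (density operator). -/
def IsState (ρ : Matrix ι ι ℂ) : Prop := ρ.PosSemidef ∧ ρ.trace = 1

/-- Quantum relative entropy `D(ρ‖σ) = tr[ρ (log ρ - log σ)]`. -/
def relEnt (ρ σ : Matrix ι ι ℂ) : ℝ := ((ρ * (matLog ρ - matLog σ)).trace).re

/-- von Neumann entropy `H(ρ) = -tr[ρ log ρ]`. -/
def vnEntropy (ρ : Matrix ι ι ℂ) : ℝ := -((ρ * matLog ρ).trace).re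

/-- Trace norm `‖X‖₁ = tr √(X† X)`. -/
def traceNorm (X : Matrix ι ι ℂ) : ℝ := ((matSqrt (Xᴴ * X)).trace).re

/-- Fidelity `F(ρ,σ) = ‖√ρ √σ‖₁²`. -/
def fidelity (ρ σ : Matrix ι ι ℂ) : ℝ := (traceNorm (matSqrt ρ * matSqrt σ)) ^ 2

variable {A B : Type*} [Fintype A] [DecidableEq A] [Fintype B] [DecidableEq B]

/-- The extension `Λ ⊗ id_m` of a map on matrices. -/
def extendChan (Λ : Matrix A A ℂ →ₗ[ℂ] Matrix B B ℂ) {m : Type*} [Fintype m]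
    (M : Matrix (A × m) (A × m) ℂ) : Matrix (B × m) (B × m) ℂ :=
  fun p q => Λ (fun a a' => M (a, p.2) (a', q.2)) p.1 q.1

/-- A quantum channel: a completely positive trace-preserving linear map. -/
structure IsQChannel (Λ : Matrix A A ℂ →ₗ[ℂ] Matrix B B ℂ) : Prop where
  tp : ∀ M, (Λ M).trace = M.trace
  cp : ∀ (m : ℕ) (M : Matrix (A × Fin m) (A × Fin m) ℂ), M.PosSemidef →
    (extendChan Λ M).PosSemidef

/-- The marginal of a state of `n` systems on the `j`-th system. -/
def marginal {n : ℕ} (ρ : Matrix (Fin n → ι) (Fin n → ι) ℂ) (j : Fin n) :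
    Matrix ι ι ℂ :=
  fun a b => ∑ f : {i : Fin n // i ≠ j} → ι,
      ρ (fun i => if h : i = j then a else f ⟨i, h⟩)
        (fun i => if h : i = j then b else f ⟨i, h⟩)

/-- `n`-fold tensor power of a matrix. -/
def tpow (σ : Matrix ι ι ℂ) (n : ℕ) : Matrix (Fin n → ι) (Fin n → ι) ℂ :=
  fun f g => ∏ i, σ (f i) (g i)

/-- Partial trace over the last `n - k` tensor factors. -/
def ptraceLast {n k : ℕ} (h : k ≤ n) (ρ : Matrix (Fin n → ι) (Fin n → ι) ℂ) :
    Matrix (Fin k → ι) (Fin k → ι) ℂ :=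
  fun a b => ∑ z : Fin (n - k) → ι,
    ρ (fun i => if h' : (i : ℕ) < k then a ⟨i, h'⟩ else z ⟨(i : ℕ) - k, by have := i.isLt; omega⟩)
      (fun i => if h' : (i : ℕ) < k then b ⟨i, h'⟩ else z ⟨(i : ℕ) - k, by have := i.isLt; omega⟩)

/-- Permutation matrix acting on `(ℂ^d)^{⊗ n}`. -/
def permMat (d n : ℕ) (π : Equiv.Perm (Fin n)) :
    Matrix (Fin n → Fin d) (Fin n → Fin d) ℂ :=
  fun f g => if g = f ∘ π then 1 else 0

/-- Orthogonal projection onto the symmetric subspace of `(ℂ^d)^{⊗ n}`. -/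
def symProj (d n : ℕ) : Matrix (Fin n → Fin d) (Fin n → Fin d) ℂ :=
  ((n.factorial : ℂ))⁻¹ • ∑ π : Equiv.Perm (Fin n), permMat d n π

/-- Dimension `d[n] = C(d+n-1, n)` of the symmetric subspace. -/
def dsym (d n : ℕ) : ℕ := (d + n - 1).choose n

/-- Maximally mixed state on the symmetric subspace. -/
def piSym (d n : ℕ) : Matrix (Fin n → Fin d) (Fin n → Fin d) ℂ :=
  ((dsym d n : ℂ))⁻¹ • symProj d n

/-- Tensoring a matrix on the first `k` factors with the identity on the last `n-k` factors. -/
def extendId {d k n : ℕ} (h : k ≤ n) (M : Matrix (Fin k → Fin d) (Fin k → Fin d) ℂ) :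
    Matrix (Fin n → Fin d) (Fin n → Fin d) ℂ :=
  fun f g => (if ∀ i : Fin n, k ≤ (i : ℕ) → f i = g i then 1 else 0) *
    M (fun i => f (Fin.castLE h i)) (fun i => g (Fin.castLE h i))

/-- The universal quantum cloning machine `C_{k→n}`. -/
def uqcm (d : ℕ) {k n : ℕ} (h : k ≤ n) (ω : Matrix (Fin k → Fin d) (Fin k → Fin d) ℂ) :
    Matrix (Fin n → Fin d) (Fin n → Fin d) ℂ :=
  (((dsym d k : ℂ)) / ((dsym d n : ℂ))) •
    (symProj d n * extendId h (symProj d k * ω * symProj d k) * symProj d n)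

/-- The symmetrized partial trace channel `P_{n→k}`. -/
def symPTrace (d : ℕ) {k n : ℕ} (h : k ≤ n) (ω : Matrix (Fin n → Fin d) (Fin n → Fin d) ℂ) :
    Matrix (Fin k → Fin d) (Fin k → Fin d) ℂ :=
  symProj d k * ptraceLast h (symProj d n * ω * symProj d n) * symProj d k

/-- Orthogonal projection onto the antisymmetric subspace of `(ℂ^d)^{⊗ n}`. -/
def antiProj (d n : ℕ) : Matrix (Fin n → Fin d) (Fin n → Fin d) ℂ :=
  ((n.factorial : ℂ))⁻¹ • ∑ π : Equiv.Perm (Fin n), ((Equiv.Perm.sign π : ℤ) : ℂ) • permMat d n π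

/-- Maximally mixed state on the antisymmetric subspace. -/
def piAnti (d n : ℕ) : Matrix (Fin n → Fin d) (Fin n → Fin d) ℂ :=
  ((d.choose n : ℂ))⁻¹ • antiProj d n

/-- The antisymmetric cloning machine. -/
def antiClone (d : ℕ) {k n : ℕ} (h : k ≤ n) (ω : Matrix (Fin k → Fin d) (Fin k → Fin d) ℂ) :
    Matrix (Fin n → Fin d) (Fin n → Fin d) ℂ :=
  (((d.choose k : ℂ)) / ((d.choose n : ℂ))) •
    (antiProj d n * extendId h (antiProj d k * ω * antiProj d k) * antiProj d n)

/-- The antisymmetrized partial trace. -/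
def antiPTrace (d : ℕ) {k n : ℕ} (h : k ≤ n) (ω : Matrix (Fin n → Fin d) (Fin n → Fin d) ℂ) :
    Matrix (Fin k → Fin d) (Fin k → Fin d) ℂ :=
  antiProj d k * ptraceLast h (antiProj d n * ω * antiProj d n) * antiProj d k

/-- Rank-one projection (outer product) `|v⟩⟨v|`. -/
def outer {α : Type*} (v : α → ℂ) : Matrix α α ℂ :=
  fun x y => v x * (starRingEnd ℂ) (v y)

/-- Slater determinant vector `φ₁ ∧ ⋯ ∧ φ_k`. -/
def slater {d k : ℕ} (w : Fin k → (Fin d → ℂ)) : (Fin k → Fin d) → ℂ :=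
  fun f => ((Real.sqrt k.factorial : ℂ))⁻¹ *
    ∑ π : Equiv.Perm (Fin k), ((Equiv.Perm.sign π : ℤ) : ℂ) * ∏ i, w (π i) (f i)

/-- Partial trace over the second tensor factor. -/
def trB {ιA ιB : Type*} [Fintype ιB] (ρ : Matrix (ιA × ιB) (ιA × ιB) ℂ) : Matrix ιA ιA ℂ :=
  fun a a' => ∑ b, ρ (a, b) (a', b)

/-- Partial trace over the first tensor factor. -/
def trA {ιA ιB : Type*} [Fintype ιA] (ρ : Matrix (ιA × ιB) (ιA × ιB) ℂ) : Matrix ιB ιB ℂ :=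
  fun b b' => ∑ a, ρ (a, b) (a, b')

/-- The probability density `β(t) = (π/2)(1 + cosh(π t))⁻¹`. -/
def betaDens (t : ℝ) : ℝ := (Real.pi / 2) * (1 + Real.cosh (Real.pi * t))⁻¹

/-- Rotated Petz recovery map `R^t_{A,X}`, mapping operators on `B` to operators on `A ⊗ B`. -/
def petzA {ιA ιB : Type*} [Fintype ιA] [DecidableEq ιA] [Fintype ιB] [DecidableEq ιB]
    (t : ℝ) (X : Matrix (ιA × ιB) (ιA × ιB) ℂ) (Y : Matrix ιB ιB ℂ) :
    Matrix (ιA × ιB) (ιA × ιB) ℂ :=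
  matCPow X ((1 + t * Complex.I) / 2) *
    ((1 : Matrix ιA ιA ℂ) ⊗ₖ
      (matCPow (trA X) (-(1 + t * Complex.I) / 2) * Y * matCPow (trA X) (-(1 - t * Complex.I) / 2))) *
    matCPow X ((1 - t * Complex.I) / 2)

/-- Rotated Petz recovery map `R^t_{B,X}`, mapping operators on `A` to operators on `A ⊗ B`. -/
def petzB {ιA ιB : Type*} [Fintype ιA] [DecidableEq ιA] [Fintype ιB] [DecidableEq ιB]
    (t : ℝ) (X : Matrix (ιA × ιB) (ιA × ιB) ℂ) (Y : Matrix ιA ιA ℂ) :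
    Matrix (ιA × ιB) (ιA × ιB) ℂ :=
  matCPow X ((1 + t * Complex.I) / 2) *
    ((matCPow (trB X) (-(1 + t * Complex.I) / 2) * Y * matCPow (trB X) (-(1 - t * Complex.I) / 2)) ⊗ₖ
      (1 : Matrix ιB ιB ℂ)) *
    matCPow X ((1 - t * Complex.I) / 2)

/-- Cloning map between two general subspaces, given by their orthogonal projections. -/
def genClone {d k n : ℕ} (h : k ≤ n) (dX dY : ℕ)
    (PX : Matrix (Fin n → Fin d) (Fin n → Fin d) ℂ)
    (PY : Matrix (Fin k → Fin d) (Fin k → Fin d) ℂ)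
    (ω : Matrix (Fin k → Fin d) (Fin k → Fin d) ℂ) :
    Matrix (Fin n → Fin d) (Fin n → Fin d) ℂ :=
  (((dY : ℂ)) / ((dX : ℂ))) • (PX * extendId h (PY * ω * PY) * PX)

/-- Partial trace channel between two general subspaces. -/
def genPTrace {d k n : ℕ} (h : k ≤ n)
    (PX : Matrix (Fin n → Fin d) (Fin n → Fin d) ℂ)
    (PY : Matrix (Fin k → Fin d) (Fin k → Fin d) ℂ)
    (ω : Matrix (Fin n → Fin d) (Fin n → Fin d) ℂ) :
    Matrix (Fin k → Fin d) (Fin k → Fin d) ℂ :=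
  PY * ptraceLast h (PX * ω * PX) * PY

end

section SlaterPf
open Equiv Equiv.Perm Finset

variable {d k n : ℕ}

/-- complex-valued sign of a permutation -/
noncomputable def csgn {m : ℕ} (τ : Equiv.Perm (Fin m)) : ℂ := ((Equiv.Perm.sign τ : ℤ) : ℂ)

lemma csgn_mul_self {m : ℕ} (τ : Perm (Fin m)) : csgn τ * csgn τ = 1 := by
  simp [csgn, ← Int.cast_mul, Int.units_mul_self]

lemma conj_csgn {m : ℕ} (τ : Perm (Fin m)) : (starRingEnd ℂ) (csgn τ) = csgn τ := by
  simp [csgn]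

lemma csgn_mul {m : ℕ} (σ τ : Perm (Fin m)) : csgn (σ * τ) = csgn σ * csgn τ := by
  simp [csgn]

lemma csgn_inv {m : ℕ} (τ : Perm (Fin m)) : csgn τ⁻¹ = csgn τ := by
  simp [csgn]

/-- unnormalized slater-type functional -/
noncomputable def G (φ : Fin n → Fin d → ℂ) (u : Fin k → Fin n) (x : Fin k → Fin d) : ℂ :=
  ∑ τ : Perm (Fin k), csgn τ * ∏ i, φ (u (τ i)) (x i)

lemma G_comp (φ : Fin n → Fin d → ℂ) (u : Fin k → Fin n) (θ : Perm (Fin k)) (x : Fin k → Fin d) :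
    G φ (fun i => u (θ i)) x = csgn θ * G φ u x := by
  unfold G
  rw [Finset.mul_sum]
  refine Fintype.sum_equiv (Equiv.mulLeft θ)
    (fun τ => csgn τ * ∏ i, φ (u (θ (τ i))) (x i))
    (fun ρ => csgn θ * (csgn ρ * ∏ i, φ (u (ρ i)) (x i))) (fun τ => ?_)
  simp only [Equiv.coe_mulLeft, Equiv.Perm.mul_apply, csgn_mul, ← mul_assoc,
    csgn_mul_self, one_mul]

lemma conj_G (φ : Fin n → Fin d → ℂ) (u : Fin k → Fin n) (x : Fin k → Fin d) :
    (starRingEnd ℂ) (G φ u x)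
      = ∑ τ : Perm (Fin k), csgn τ * ∏ i, (starRingEnd ℂ) (φ (u (τ i)) (x i)) := by
  unfold G
  rw [map_sum]
  refine Finset.sum_congr rfl fun τ _ => ?_
  rw [_root_.map_mul, conj_csgn, map_prod]

lemma ortho_sum {m : ℕ} {φ : Fin n → Fin d → ℂ}
    (hφ : ∀ i j, (∑ a, (starRingEnd ℂ) (φ i a) * φ j a) = if i = j then 1 else 0)
    (p q : Fin m → Fin n) :
    (∑ x : Fin m → Fin d, ∏ j, φ (p j) (x j) * (starRingEnd ℂ) (φ (q j) (x j)))
      = if ∀ j, q j = p j then 1 else 0 := by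
  have h1 : ∀ j : Fin m, (∑ c : Fin d, φ (p j) c * (starRingEnd ℂ) (φ (q j) c))
      = if q j = p j then 1 else 0 := by
    intro j
    rw [← hφ (q j) (p j)]
    exact Finset.sum_congr rfl fun c _ => mul_comm _ _
  have h2 := Finset.prod_univ_sum (fun _ : Fin m => (Finset.univ : Finset (Fin d)))
    (fun j c => φ (p j) c * (starRingEnd ℂ) (φ (q j) c))
  rw [Fintype.piFinset_univ] at h2
  rw [← h2]
  calc (∏ j : Fin m, ∑ c : Fin d, φ (p j) c * (starRingEnd ℂ) (φ (q j) c))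
      = ∏ j : Fin m, (if q j = p j then (1:ℂ) else 0) :=
        Finset.prod_congr rfl fun j _ => h1 j
    _ = if ∀ j, q j = p j then 1 else 0 := by
        rw [Finset.prod_boole]
        simp

lemma gram {φ : Fin n → Fin d → ℂ}
    (hφ : ∀ i j, (∑ a, (starRingEnd ℂ) (φ i a) * φ j a) = if i = j then 1 else 0)
    (u v : Fin k → Fin n) :
    (∑ x : Fin k → Fin d, (starRingEnd ℂ) (G φ u x) * G φ v x)
      = ∑ τ : Perm (Fin k), ∑ τ' : Perm (Fin k),
          csgn τ * csgn τ' * (if ∀ i, u (τ i) = v (τ' i) then 1 else 0) := by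
  calc (∑ x : Fin k → Fin d, (starRingEnd ℂ) (G φ u x) * G φ v x)
      = ∑ x : Fin k → Fin d, ∑ τ : Perm (Fin k), ∑ τ' : Perm (Fin k),
          (csgn τ * ∏ i, (starRingEnd ℂ) (φ (u (τ i)) (x i))) *
            (csgn τ' * ∏ i, φ (v (τ' i)) (x i)) := by
        refine Finset.sum_congr rfl fun x _ => ?_
        rw [conj_G, G, Fintype.sum_mul_sum]
    _ = ∑ τ : Perm (Fin k), ∑ τ' : Perm (Fin k),
          csgn τ * csgn τ' *
            ∑ x : Fin k → Fin d, ∏ i, φ (v (τ' i)) (x i) * (starRingEnd ℂ) (φ (u (τ i)) (x i)) := by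
        rw [Finset.sum_comm]
        refine Finset.sum_congr rfl fun τ _ => ?_
        rw [Finset.sum_comm]
        refine Finset.sum_congr rfl fun τ' _ => ?_
        rw [Finset.mul_sum]
        refine Finset.sum_congr rfl fun x _ => ?_
        rw [mul_mul_mul_comm, ← Finset.prod_mul_distrib]
        congr 1
        exact Finset.prod_congr rfl fun i _ => mul_comm _ _
    _ = ∑ τ : Perm (Fin k), ∑ τ' : Perm (Fin k),
          csgn τ * csgn τ' * (if ∀ i, u (τ i) = v (τ' i) then 1 else 0) := by
        refine Finset.sum_congr rfl fun τ _ => Finset.sum_congr rfl fun τ' _ => ?_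
        rw [ortho_sum hφ]

lemma sum_ofSubtype {p : Fin n → Prop} [DecidablePred p] (f : Perm (Fin n) → ℂ) :
    (∑ t : Perm (Fin n), if (∀ a, ¬ p a → t a = a) then f t else 0)
      = ∑ t' : Perm {a : Fin n // p a}, f (Equiv.Perm.ofSubtype t') := by
  rw [← Finset.sum_filter,
    Finset.sum_subtype (p := fun t : Perm (Fin n) => ∀ a, ¬ p a → t a = a)
      (Finset.univ.filter fun t : Perm (Fin n) => ∀ a, ¬ p a → t a = a)
      (fun x => by simp) f]
  rw [← Equiv.sum_comp (Equiv.Perm.subtypeEquivSubtypePerm p)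
    (fun t : {f : Perm (Fin n) // ∀ a, ¬ p a → f a = a} => f t.val)]
  rfl

def fequiv (hkn : k ≤ n) : Fin k ≃ {a : Fin n // (a : ℕ) < k} where
  toFun i := ⟨Fin.castLE hkn i, i.isLt⟩
  invFun a := ⟨(a : Fin n), a.2⟩
  left_inv i := rfl
  right_inv a := rfl

noncomputable def eperm (hkn : k ≤ n) (θ : Perm (Fin k)) : Perm (Fin n) :=
  Equiv.Perm.ofSubtype ((fequiv hkn).permCongr θ)

lemma eperm_castLE (hkn : k ≤ n) (θ : Perm (Fin k)) (i : Fin k) :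
    eperm hkn θ (Fin.castLE hkn i) = Fin.castLE hkn (θ i) := by
  unfold eperm
  rw [Equiv.Perm.ofSubtype_apply_of_mem (p := fun a : Fin n => (a : ℕ) < k)
    ((fequiv hkn).permCongr θ) (show ((Fin.castLE hkn i : Fin n) : ℕ) < k from i.isLt)]
  rfl

lemma csgn_eperm (hkn : k ≤ n) (θ : Perm (Fin k)) : csgn (eperm hkn θ) = csgn θ := by
  unfold csgn eperm
  rw [Equiv.Perm.sign_ofSubtype, Equiv.Perm.sign_permCongr]

lemma sum_fixlast (hkn : k ≤ n) (f : Perm (Fin n) → ℂ) :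
    (∑ t : Perm (Fin n), if (∀ a : Fin n, k ≤ (a:ℕ) → t a = a) then f t else 0)
      = ∑ θ : Perm (Fin k), f (eperm hkn θ) := by
  have h1 : (∑ t : Perm (Fin n), if (∀ a : Fin n, k ≤ (a:ℕ) → t a = a) then f t else 0)
      = ∑ t : Perm (Fin n), if (∀ a : Fin n, ¬ ((a:ℕ) < k) → t a = a) then f t else 0 := by
    refine Finset.sum_congr rfl fun t _ => ?_
    refine if_congr ?_ rfl rfl
    constructor
    · intro h a ha; exact h a (Nat.not_lt.mp ha)
    · intro h a ha; exact h a (Nat.not_lt.mpr ha)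
  rw [h1, sum_ofSubtype]
  rw [← Equiv.sum_comp ((fequiv hkn).permCongr)
    (fun t' : Perm {a : Fin n // (a:ℕ) < k} => f (Equiv.Perm.ofSubtype t'))]
  rfl

def eqNK (hkn : k ≤ n) : {a : Fin n // ¬ ((a:ℕ) < k)} ≃ Fin (n - k) where
  toFun a := ⟨(a.1 : ℕ) - k, by have h1 := a.1.isLt; have h2 := a.2; omega⟩
  invFun j := ⟨⟨k + (j:ℕ), by have := j.isLt; omega⟩, by show ¬ (k + (j:ℕ) < k); omega⟩
  left_inv a := by
    have h := a.2
    refine Subtype.ext (Fin.ext ?_)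
    show k + ((a.1 : ℕ) - k) = (a.1 : ℕ)
    omega
  right_inv j := by
    refine Fin.ext ?_
    show (k + (j:ℕ)) - k = (j:ℕ)
    omega

lemma card_fixfirst (hkn : k ≤ n) :
    (∑ t : Perm (Fin n), if (∀ a : Fin n, (a:ℕ) < k → t a = a) then (1:ℂ) else 0)
      = ((n - k).factorial : ℂ) := by
  have h1 : (∑ t : Perm (Fin n), if (∀ a : Fin n, (a:ℕ) < k → t a = a) then (1:ℂ) else 0)
      = ∑ t : Perm (Fin n), if (∀ a : Fin n, ¬ ¬ ((a:ℕ) < k) → t a = a) then (1:ℂ) else 0 := by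
    refine Finset.sum_congr rfl fun t _ => ?_
    refine if_congr ?_ rfl rfl
    constructor
    · intro h a ha; exact h a (not_not.mp ha)
    · intro h a ha; exact h a (not_not.mpr ha)
  rw [h1, sum_ofSubtype (p := fun a : Fin n => ¬ ((a:ℕ) < k)) (f := fun _ => (1:ℂ))]
  rw [Finset.sum_const, Finset.card_univ, Fintype.card_perm]
  have hc : Fintype.card {a : Fin n // ¬ ((a:ℕ) < k)} = n - k := by
    rw [Fintype.card_congr (eqNK hkn), Fintype.card_fin]
  rw [hc]
  simp


/-- gluing the first `k` and last `n-k` coordinates -/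
def glue (hkn : k ≤ n) (a : Fin k → Fin d) (z : Fin (n - k) → Fin d) : Fin n → Fin d :=
  fun i => if h' : (i : ℕ) < k then a ⟨i, h'⟩ else z ⟨(i : ℕ) - k, by have := i.isLt; omega⟩

lemma ptraceLast_apply (hkn : k ≤ n) (ρ0 : Matrix (Fin n → Fin d) (Fin n → Fin d) ℂ)
    (a b : Fin k → Fin d) :
    ptraceLast hkn ρ0 a b = ∑ z : Fin (n - k) → Fin d, ρ0 (glue hkn a z) (glue hkn b z) := rfl

def sumE (hkn : k ≤ n) : (Fin k ⊕ Fin (n - k)) ≃ Fin n where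
  toFun x := match x with
    | Sum.inl i => Fin.castLE hkn i
    | Sum.inr j => ⟨k + (j : ℕ), by have := j.isLt; omega⟩
  invFun i := if h : (i : ℕ) < k then Sum.inl ⟨i, h⟩
    else Sum.inr ⟨(i : ℕ) - k, by have := i.isLt; omega⟩
  left_inv x := by
    cases x with
    | inl i =>
        dsimp only
        rw [dif_pos (show ((Fin.castLE hkn i : Fin n) : ℕ) < k from i.isLt)]
        rfl
    | inr j =>
        dsimp only
        rw [dif_neg (show ¬ ((k + (j:ℕ)) < k) by omega)]
        congr 1
        refine Fin.ext ?_
        show (k + (j:ℕ)) - k = (j:ℕ)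
        omega
  right_inv i := by
    dsimp only
    by_cases h : (i : ℕ) < k
    · rw [dif_pos h]
      rfl
    · rw [dif_neg h]
      refine Fin.ext ?_
      show k + ((i:ℕ) - k) = (i:ℕ)
      have := i.isLt
      omega

lemma sumE_inl (hkn : k ≤ n) (i : Fin k) : sumE hkn (Sum.inl i) = Fin.castLE hkn i := rfl

lemma sumE_inr_val (hkn : k ≤ n) (j : Fin (n - k)) :
    ((sumE hkn (Sum.inr j) : Fin n) : ℕ) = k + (j : ℕ) := rfl

lemma glue_inl (hkn : k ≤ n) (a : Fin k → Fin d) (z : Fin (n - k) → Fin d) (i : Fin k) :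
    glue hkn a z (sumE hkn (Sum.inl i)) = a i := by
  show glue hkn a z (Fin.castLE hkn i) = a i
  unfold glue
  rw [dif_pos (show ((Fin.castLE hkn i : Fin n) : ℕ) < k from i.isLt)]
  exact congrArg a (Fin.ext rfl)

lemma glue_inr (hkn : k ≤ n) (a : Fin k → Fin d) (z : Fin (n - k) → Fin d) (j : Fin (n - k)) :
    glue hkn a z (sumE hkn (Sum.inr j)) = z j := by
  unfold glue
  rw [dif_neg (show ¬ (((sumE hkn (Sum.inr j) : Fin n) : ℕ) < k) by rw [sumE_inr_val]; omega)]
  refine congrArg z (Fin.ext ?_)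
  show ((sumE hkn (Sum.inr j) : Fin n) : ℕ) - k = (j : ℕ)
  rw [sumE_inr_val]
  omega

lemma slater_mul_conj (φ : Fin n → (Fin d → ℂ)) (f g : Fin n → Fin d) :
    slater φ f * (starRingEnd ℂ) (slater φ g)
      = ((n.factorial : ℂ))⁻¹ * ∑ π : Perm (Fin n), ∑ σ : Perm (Fin n),
          csgn π * csgn σ *
            ((∏ i, φ (π i) (f i)) * (starRingEnd ℂ) (∏ i, φ (σ i) (g i))) := by
  unfold slater
  rw [_root_.map_mul, map_inv₀, Complex.conj_ofReal]
  rw [mul_mul_mul_comm]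
  congr 1
  · rw [← mul_inv, ← Complex.ofReal_mul,
      Real.mul_self_sqrt (by positivity)]
    norm_num
  · rw [map_sum, Fintype.sum_mul_sum]
    refine Finset.sum_congr rfl fun π _ => Finset.sum_congr rfl fun σ _ => ?_
    rw [_root_.map_mul, map_intCast]
    show (csgn π * _) * (csgn σ * _) = _
    rw [mul_mul_mul_comm]

lemma inner_z (hkn : k ≤ n) {φ : Fin n → Fin d → ℂ}
    (hφ : ∀ i j, (∑ a, (starRingEnd ℂ) (φ i a) * φ j a) = if i = j then 1 else 0)
    (π σ : Perm (Fin n)) (a b : Fin k → Fin d) :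
    (∑ z : Fin (n - k) → Fin d,
        (∏ i, φ (π i) (glue hkn a z i)) * (starRingEnd ℂ) (∏ i, φ (σ i) (glue hkn b z i)))
      = (if ∀ j : Fin n, k ≤ (j:ℕ) → σ j = π j then (1:ℂ) else 0) *
          ∏ i : Fin k, φ (π (Fin.castLE hkn i)) (a i) *
            (starRingEnd ℂ) (φ (σ (Fin.castLE hkn i)) (b i)) := by
  have step1 : ∀ z : Fin (n - k) → Fin d,
      (∏ i, φ (π i) (glue hkn a z i)) * (starRingEnd ℂ) (∏ i, φ (σ i) (glue hkn b z i))
        = (∏ i : Fin k, φ (π (Fin.castLE hkn i)) (a i) *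
              (starRingEnd ℂ) (φ (σ (Fin.castLE hkn i)) (b i))) *
            (∏ j : Fin (n - k), φ (π (sumE hkn (Sum.inr j))) (z j) *
              (starRingEnd ℂ) (φ (σ (sumE hkn (Sum.inr j))) (z j))) := by
    intro z
    rw [map_prod, ← Finset.prod_mul_distrib]
    rw [← Equiv.prod_comp (sumE hkn)
      (fun i => φ (π i) (glue hkn a z i) * (starRingEnd ℂ) (φ (σ i) (glue hkn b z i)))]
    rw [Fintype.prod_sum_type]
    congr 1
    · refine Finset.prod_congr rfl fun i _ => ?_
      rw [glue_inl, glue_inl]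
      rfl
    · refine Finset.prod_congr rfl fun j _ => ?_
      rw [glue_inr, glue_inr]
  calc (∑ z : Fin (n - k) → Fin d,
        (∏ i, φ (π i) (glue hkn a z i)) * (starRingEnd ℂ) (∏ i, φ (σ i) (glue hkn b z i)))
      = (∏ i : Fin k, φ (π (Fin.castLE hkn i)) (a i) *
            (starRingEnd ℂ) (φ (σ (Fin.castLE hkn i)) (b i))) *
          ∑ z : Fin (n - k) → Fin d,
            ∏ j : Fin (n - k), φ (π (sumE hkn (Sum.inr j))) (z j) *
              (starRingEnd ℂ) (φ (σ (sumE hkn (Sum.inr j))) (z j)) := by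
        rw [Finset.mul_sum]
        exact Finset.sum_congr rfl fun z _ => step1 z
    _ = (∏ i : Fin k, φ (π (Fin.castLE hkn i)) (a i) *
            (starRingEnd ℂ) (φ (σ (Fin.castLE hkn i)) (b i))) *
          (if ∀ j : Fin (n-k), σ (sumE hkn (Sum.inr j)) = π (sumE hkn (Sum.inr j))
            then (1:ℂ) else 0) := by
        rw [ortho_sum hφ]
    _ = _ := by
        rw [mul_comm]
        congr 1
        refine if_congr ?_ rfl rfl
        constructor
        · intro h i hi
          have hrepr : sumE hkn (Sum.inr ⟨(i:ℕ) - k, by have := i.isLt; omega⟩) = i := by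
            refine Fin.ext ?_
            show k + ((i:ℕ) - k) = (i:ℕ)
            omega
          rw [← hrepr]
          exact h _
        · intro h j
          exact h _ (show k ≤ ((sumE hkn (Sum.inr j) : Fin n) : ℕ) from by
            show k ≤ k + (j:ℕ); omega)

lemma rho_pre (hkn : k ≤ n) {φ : Fin n → (Fin d → ℂ)}
    (hφ : ∀ i j, (∑ a, (starRingEnd ℂ) (φ i a) * φ j a) = if i = j then 1 else 0)
    (a b : Fin k → Fin d) :
    ptraceLast hkn (outer (slater φ)) a b
      = ((n.factorial : ℂ))⁻¹ * ∑ π : Perm (Fin n), ∑ σ : Perm (Fin n),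
          csgn π * csgn σ * ((if ∀ j : Fin n, k ≤ (j:ℕ) → σ j = π j then (1:ℂ) else 0) *
            ∏ i : Fin k, φ (π (Fin.castLE hkn i)) (a i) *
              (starRingEnd ℂ) (φ (σ (Fin.castLE hkn i)) (b i))) := by
  rw [ptraceLast_apply]
  calc (∑ z : Fin (n - k) → Fin d, outer (slater φ) (glue hkn a z) (glue hkn b z))
      = ∑ z : Fin (n - k) → Fin d,
          ((n.factorial : ℂ))⁻¹ * ∑ π : Perm (Fin n), ∑ σ : Perm (Fin n),
            csgn π * csgn σ *
              ((∏ i, φ (π i) (glue hkn a z i)) *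
                (starRingEnd ℂ) (∏ i, φ (σ i) (glue hkn b z i))) :=
        Finset.sum_congr rfl fun z _ => slater_mul_conj φ _ _
    _ = ((n.factorial : ℂ))⁻¹ * ∑ π : Perm (Fin n), ∑ σ : Perm (Fin n),
          csgn π * csgn σ * ∑ z : Fin (n - k) → Fin d,
            (∏ i, φ (π i) (glue hkn a z i)) *
              (starRingEnd ℂ) (∏ i, φ (σ i) (glue hkn b z i)) := by
        rw [← Finset.mul_sum]
        congr 1
        rw [Finset.sum_comm]
        refine Finset.sum_congr rfl fun π _ => ?_
        rw [Finset.sum_comm]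
        refine Finset.sum_congr rfl fun σ _ => ?_
        rw [Finset.mul_sum]
    _ = _ := by
        congr 1
        refine Finset.sum_congr rfl fun π _ => Finset.sum_congr rfl fun σ _ => ?_
        rw [inner_z hkn hφ]


set_option maxHeartbeats 1000000 in
lemma rho_mid (hkn : k ≤ n) {φ : Fin n → (Fin d → ℂ)}
    (hφ : ∀ i j, (∑ a, (starRingEnd ℂ) (φ i a) * φ j a) = if i = j then 1 else 0)
    (a b : Fin k → Fin d) :
    ptraceLast hkn (outer (slater φ)) a b
      = ((n.factorial : ℂ))⁻¹ * ∑ π : Perm (Fin n),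
          (∏ i : Fin k, φ (π (Fin.castLE hkn i)) (a i)) *
            (starRingEnd ℂ) (G φ (fun i => π (Fin.castLE hkn i)) b) := by
  rw [rho_pre hkn hφ a b]
  congr 1
  refine Finset.sum_congr rfl fun π _ => ?_
  calc (∑ σ : Perm (Fin n), csgn π * csgn σ *
          ((if ∀ j : Fin n, k ≤ (j:ℕ) → σ j = π j then (1:ℂ) else 0) *
            ∏ i : Fin k, φ (π (Fin.castLE hkn i)) (a i) *
              (starRingEnd ℂ) (φ (σ (Fin.castLE hkn i)) (b i))))
      = ∑ t : Perm (Fin n),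
          (if ∀ j : Fin n, k ≤ (j:ℕ) → t j = j then
            csgn t * ∏ i : Fin k, φ (π (Fin.castLE hkn i)) (a i) *
              (starRingEnd ℂ) (φ (π (t (Fin.castLE hkn i))) (b i))
          else 0) := by
        rw [← Equiv.sum_comp (Equiv.mulLeft π) (fun σ => csgn π * csgn σ *
          ((if ∀ j : Fin n, k ≤ (j:ℕ) → σ j = π j then (1:ℂ) else 0) *
            ∏ i : Fin k, φ (π (Fin.castLE hkn i)) (a i) *
              (starRingEnd ℂ) (φ (σ (Fin.castLE hkn i)) (b i))))]
        refine Finset.sum_congr rfl fun t _ => ?_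
        simp only [Equiv.coe_mulLeft, Equiv.Perm.mul_apply]
        have h1 : csgn π * csgn (π * t) = csgn t := by
          rw [csgn_mul, ← mul_assoc, csgn_mul_self, one_mul]
        rw [show csgn π * csgn (π * t) = csgn t from h1]
        · split_ifs <;> simp_all
    _ = ∑ θ : Perm (Fin k),
          csgn (eperm hkn θ) * ∏ i : Fin k, φ (π (Fin.castLE hkn i)) (a i) *
            (starRingEnd ℂ) (φ (π (eperm hkn θ (Fin.castLE hkn i))) (b i)) :=
        sum_fixlast hkn _
    _ = ∑ θ : Perm (Fin k),
          csgn θ * ∏ i : Fin k, φ (π (Fin.castLE hkn i)) (a i) *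
            (starRingEnd ℂ) (φ (π (Fin.castLE hkn (θ i))) (b i)) := by
        refine Finset.sum_congr rfl fun θ _ => ?_
        simp only [csgn_eperm, eperm_castLE]
    _ = (∏ i : Fin k, φ (π (Fin.castLE hkn i)) (a i)) *
          (starRingEnd ℂ) (G φ (fun i => π (Fin.castLE hkn i)) b) := by
        rw [conj_G, Finset.mul_sum]
        refine Finset.sum_congr rfl fun θ _ => ?_
        rw [Finset.prod_mul_distrib, mul_left_comm]

set_option maxHeartbeats 1000000 in
lemma rho_eq (hkn : k ≤ n) {φ : Fin n → (Fin d → ℂ)}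
    (hφ : ∀ i j, (∑ a, (starRingEnd ℂ) (φ i a) * φ j a) = if i = j then 1 else 0)
    (a b : Fin k → Fin d) :
    ptraceLast hkn (outer (slater φ)) a b
      = ((n.factorial : ℂ) * (k.factorial : ℂ))⁻¹ *
          ∑ π : Perm (Fin n), G φ (fun i => π (Fin.castLE hkn i)) a *
            (starRingEnd ℂ) (G φ (fun i => π (Fin.castLE hkn i)) b) := by
  have key : (∑ π : Perm (Fin n), G φ (fun i => π (Fin.castLE hkn i)) a *
        (starRingEnd ℂ) (G φ (fun i => π (Fin.castLE hkn i)) b))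
      = (k.factorial : ℂ) * ∑ π : Perm (Fin n),
          (∏ i : Fin k, φ (π (Fin.castLE hkn i)) (a i)) *
            (starRingEnd ℂ) (G φ (fun i => π (Fin.castLE hkn i)) b) := by
    calc (∑ π : Perm (Fin n), G φ (fun i => π (Fin.castLE hkn i)) a *
          (starRingEnd ℂ) (G φ (fun i => π (Fin.castLE hkn i)) b))
        = ∑ π : Perm (Fin n), ∑ θ : Perm (Fin k),
            (csgn θ * ∏ i, φ (π (Fin.castLE hkn (θ i))) (a i)) *
              (starRingEnd ℂ) (G φ (fun i => π (Fin.castLE hkn i)) b) := by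
          refine Finset.sum_congr rfl fun π _ => ?_
          rw [show G φ (fun i => π (Fin.castLE hkn i)) a
            = ∑ θ : Perm (Fin k), csgn θ * ∏ i, φ (π (Fin.castLE hkn (θ i))) (a i) from rfl]
          rw [Finset.sum_mul]
      _ = ∑ θ : Perm (Fin k), ∑ π : Perm (Fin n),
            (csgn θ * ∏ i, φ (π (Fin.castLE hkn (θ i))) (a i)) *
              (starRingEnd ℂ) (G φ (fun i => π (Fin.castLE hkn i)) b) := Finset.sum_comm
      _ = ∑ θ : Perm (Fin k), ∑ π : Perm (Fin n),
            (∏ i : Fin k, φ (π (Fin.castLE hkn i)) (a i)) *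
              (starRingEnd ℂ) (G φ (fun i => π (Fin.castLE hkn i)) b) := by
          refine Finset.sum_congr rfl fun θ _ => ?_
          rw [← Equiv.sum_comp (Equiv.mulRight (eperm hkn θ)) (fun π =>
            (∏ i : Fin k, φ (π (Fin.castLE hkn i)) (a i)) *
              (starRingEnd ℂ) (G φ (fun i => π (Fin.castLE hkn i)) b))]
          refine Finset.sum_congr rfl fun π _ => ?_
          simp only [Equiv.coe_mulRight, Equiv.Perm.mul_apply, eperm_castLE]
          rw [show G φ (fun i => π (Fin.castLE hkn (θ i))) b
            = csgn θ * G φ (fun j => π (Fin.castLE hkn j)) b from G_comp φ (fun j => π (Fin.castLE hkn j)) θ b]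
          rw [_root_.map_mul, conj_csgn]
          ring
      _ = (k.factorial : ℂ) * ∑ π : Perm (Fin n),
            (∏ i : Fin k, φ (π (Fin.castLE hkn i)) (a i)) *
              (starRingEnd ℂ) (G φ (fun i => π (Fin.castLE hkn i)) b) := by
          rw [Finset.sum_const, Finset.card_univ, Fintype.card_perm, Fintype.card_fin,
            nsmul_eq_mul]
  have hk0 : (k.factorial : ℂ) ≠ 0 := Nat.cast_ne_zero.mpr (Nat.factorial_ne_zero k)
  rw [rho_mid hkn hφ a b, key, mul_inv, mul_assoc,
    ← mul_assoc ((k.factorial : ℂ))⁻¹, inv_mul_cancel₀ hk0, one_mul]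


set_option maxHeartbeats 1000000 in
lemma trace_rho (hkn : k ≤ n) {φ : Fin n → (Fin d → ℂ)}
    (hφ : ∀ i j, (∑ a, (starRingEnd ℂ) (φ i a) * φ j a) = if i = j then 1 else 0) :
    (ptraceLast hkn (outer (slater φ))).trace = 1 := by
  have hn0 : (n.factorial : ℂ) ≠ 0 := Nat.cast_ne_zero.mpr (Nat.factorial_ne_zero n)
  have hk0 : (k.factorial : ℂ) ≠ 0 := Nat.cast_ne_zero.mpr (Nat.factorial_ne_zero k)
  have hgram : ∀ π : Perm (Fin n),
      (∑ x : Fin k → Fin d, G φ (fun i => π (Fin.castLE hkn i)) x *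
        (starRingEnd ℂ) (G φ (fun i => π (Fin.castLE hkn i)) x)) = (k.factorial : ℂ) := by
    intro π
    calc (∑ x : Fin k → Fin d, G φ (fun i => π (Fin.castLE hkn i)) x *
          (starRingEnd ℂ) (G φ (fun i => π (Fin.castLE hkn i)) x))
        = ∑ x : Fin k → Fin d, (starRingEnd ℂ) (G φ (fun i => π (Fin.castLE hkn i)) x) *
            G φ (fun i => π (Fin.castLE hkn i)) x :=
          Finset.sum_congr rfl fun x _ => mul_comm _ _
      _ = ∑ τ : Perm (Fin k), ∑ τ' : Perm (Fin k),
            csgn τ * csgn τ' * (if ∀ i, π (Fin.castLE hkn (τ i)) = π (Fin.castLE hkn (τ' i))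
              then (1:ℂ) else 0) := gram hφ _ _
      _ = ∑ τ : Perm (Fin k), ∑ τ' : Perm (Fin k),
            csgn τ * csgn τ' * (if τ = τ' then (1:ℂ) else 0) := by
          refine Finset.sum_congr rfl fun τ _ => Finset.sum_congr rfl fun τ' _ => ?_
          refine congrArg _ (if_congr ?_ rfl rfl)
          constructor
          · intro h
            refine Equiv.ext fun i => ?_
            exact Fin.castLE_injective hkn (π.injective (h i))
          · intro h i; rw [h]
      _ = ∑ τ : Perm (Fin k), csgn τ * csgn τ := by
          refine Finset.sum_congr rfl fun τ _ => ?_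
          simp [mul_ite, mul_one, mul_zero, Finset.sum_ite_eq]
      _ = ∑ _τ : Perm (Fin k), (1:ℂ) :=
          Finset.sum_congr rfl fun τ _ => csgn_mul_self τ
      _ = (k.factorial : ℂ) := by
          rw [Finset.sum_const, Finset.card_univ, Fintype.card_perm, Fintype.card_fin,
            nsmul_eq_mul, mul_one]
  calc (ptraceLast hkn (outer (slater φ))).trace
      = ∑ x : Fin k → Fin d, ptraceLast hkn (outer (slater φ)) x x := rfl
    _ = ∑ x : Fin k → Fin d, ((n.factorial : ℂ) * (k.factorial : ℂ))⁻¹ *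
          ∑ π : Perm (Fin n), G φ (fun i => π (Fin.castLE hkn i)) x *
            (starRingEnd ℂ) (G φ (fun i => π (Fin.castLE hkn i)) x) :=
        Finset.sum_congr rfl fun x _ => rho_eq hkn hφ x x
    _ = ((n.factorial : ℂ) * (k.factorial : ℂ))⁻¹ *
          ∑ π : Perm (Fin n), ∑ x : Fin k → Fin d,
            G φ (fun i => π (Fin.castLE hkn i)) x *
              (starRingEnd ℂ) (G φ (fun i => π (Fin.castLE hkn i)) x) := by
        rw [← Finset.mul_sum]
        congr 1
        exact Finset.sum_comm
    _ = ((n.factorial : ℂ) * (k.factorial : ℂ))⁻¹ *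
          ∑ _π : Perm (Fin n), (k.factorial : ℂ) := by
        congr 1
        exact Finset.sum_congr rfl fun π _ => hgram π
    _ = 1 := by
        rw [Finset.sum_const, Finset.card_univ, Fintype.card_perm, Fintype.card_fin,
          nsmul_eq_mul]
        field_simp

lemma cond_G (hkn : k ≤ n) (φ : Fin n → (Fin d → ℂ)) {π π' : Perm (Fin n)}
    {τ τ' : Perm (Fin k)}
    (h : ∀ i, π (Fin.castLE hkn (τ i)) = π' (Fin.castLE hkn (τ' i))) (b : Fin k → Fin d) :
    G φ (fun j => π' (Fin.castLE hkn j)) b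
      = csgn τ * csgn τ' * G φ (fun j => π (Fin.castLE hkn j)) b := by
  have hfun : (fun j => π' (Fin.castLE hkn j))
      = fun j => π (Fin.castLE hkn ((τ * τ'⁻¹) j)) := by
    funext j
    have h2 := h (τ'⁻¹ j)
    rw [show τ' (τ'⁻¹ j) = j from τ'.apply_symm_apply j] at h2
    rw [← h2]
    rfl
  rw [hfun]
  rw [show G φ (fun j => π (Fin.castLE hkn ((τ * τ'⁻¹) j))) b
    = csgn (τ * τ'⁻¹) * G φ (fun j => π (Fin.castLE hkn j)) b
    from G_comp φ (fun j => π (Fin.castLE hkn j)) (τ * τ'⁻¹) b]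
  rw [csgn_mul, csgn_inv]

set_option maxHeartbeats 1000000 in
lemma count_cond (hkn : k ≤ n) (π : Perm (Fin n)) (τ τ' : Perm (Fin k)) :
    (∑ π' : Perm (Fin n),
        if ∀ i, π (Fin.castLE hkn (τ i)) = π' (Fin.castLE hkn (τ' i)) then (1:ℂ) else 0)
      = (((n - k).factorial : ℂ)) := by
  have hw : ∀ j : Fin k,
      (π * eperm hkn (τ * τ'⁻¹)) (Fin.castLE hkn j) = π (Fin.castLE hkn (τ (τ'⁻¹ j))) := by
    intro j
    rw [Equiv.Perm.mul_apply, eperm_castLE, Equiv.Perm.mul_apply]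
  calc (∑ π' : Perm (Fin n),
        if ∀ i, π (Fin.castLE hkn (τ i)) = π' (Fin.castLE hkn (τ' i)) then (1:ℂ) else 0)
      = ∑ σ : Perm (Fin n),
          (if ∀ i, π (Fin.castLE hkn (τ i))
              = ((π * eperm hkn (τ * τ'⁻¹)) * σ) (Fin.castLE hkn (τ' i)) then (1:ℂ) else 0) := by
        rw [← Equiv.sum_comp (Equiv.mulLeft (π * eperm hkn (τ * τ'⁻¹)))
          (fun π' => if ∀ i, π (Fin.castLE hkn (τ i)) = π' (Fin.castLE hkn (τ' i))
            then (1:ℂ) else 0)]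
        refine Finset.sum_congr rfl fun σ _ => ?_
        rfl
    _ = ∑ σ : Perm (Fin n), (if ∀ a : Fin n, (a:ℕ) < k → σ a = a then (1:ℂ) else 0) := by
        refine Finset.sum_congr rfl fun σ _ => ?_
        refine if_congr ?_ rfl rfl
        constructor
        · intro h a ha
          have key := h (τ'⁻¹ ⟨(a:ℕ), ha⟩)
          rw [show τ' (τ'⁻¹ ⟨(a:ℕ), ha⟩) = ⟨(a:ℕ), ha⟩ from τ'.apply_symm_apply _] at key
          rw [Equiv.Perm.mul_apply] at key
          rw [← hw (⟨(a:ℕ), ha⟩ : Fin k)] at key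
          have hres := (EmbeddingLike.apply_eq_iff_eq (π * eperm hkn (τ * τ'⁻¹))).mp key
          have hca : (Fin.castLE hkn (⟨(a:ℕ), ha⟩ : Fin k) : Fin n) = a := Fin.ext rfl
          rw [hca] at hres
          exact hres.symm
        · intro h i
          rw [Equiv.Perm.mul_apply,
            h (Fin.castLE hkn (τ' i)) (show ((Fin.castLE hkn (τ' i) : Fin n) : ℕ) < k
              from (τ' i).isLt),
            hw (τ' i), show τ'⁻¹ (τ' i) = i from τ'.symm_apply_apply i]
    _ = (((n - k).factorial : ℂ)) := card_fixfirst hkn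

set_option maxHeartbeats 1000000 in
lemma inner_sum_pi' (hkn : k ≤ n) (φ : Fin n → (Fin d → ℂ)) (π : Perm (Fin n))
    (τ τ' : Perm (Fin k)) (a b : Fin k → Fin d) :
    (∑ π' : Perm (Fin n),
        (G φ (fun i => π (Fin.castLE hkn i)) a *
            (starRingEnd ℂ) (G φ (fun i => π' (Fin.castLE hkn i)) b)) *
          (csgn τ * csgn τ' *
            (if ∀ i, π (Fin.castLE hkn (τ i)) = π' (Fin.castLE hkn (τ' i)) then (1:ℂ) else 0)))
      = (((n - k).factorial : ℂ)) *
          (G φ (fun i => π (Fin.castLE hkn i)) a *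
            (starRingEnd ℂ) (G φ (fun i => π (Fin.castLE hkn i)) b)) := by
  calc (∑ π' : Perm (Fin n),
        (G φ (fun i => π (Fin.castLE hkn i)) a *
            (starRingEnd ℂ) (G φ (fun i => π' (Fin.castLE hkn i)) b)) *
          (csgn τ * csgn τ' *
            (if ∀ i, π (Fin.castLE hkn (τ i)) = π' (Fin.castLE hkn (τ' i)) then (1:ℂ) else 0)))
      = ∑ π' : Perm (Fin n),
          (if ∀ i, π (Fin.castLE hkn (τ i)) = π' (Fin.castLE hkn (τ' i)) then (1:ℂ) else 0) *
            (G φ (fun i => π (Fin.castLE hkn i)) a *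
              (starRingEnd ℂ) (G φ (fun i => π (Fin.castLE hkn i)) b)) := by
        refine Finset.sum_congr rfl fun π' _ => ?_
        by_cases hcd : ∀ i, π (Fin.castLE hkn (τ i)) = π' (Fin.castLE hkn (τ' i))
        · rw [if_pos hcd, mul_one, one_mul]
          rw [cond_G hkn φ hcd b, _root_.map_mul, _root_.map_mul, conj_csgn, conj_csgn]
          have e1 := csgn_mul_self τ
          have e2 := csgn_mul_self τ'
          linear_combination (G φ (fun i => π (Fin.castLE hkn i)) a *
            (starRingEnd ℂ) (G φ (fun i => π (Fin.castLE hkn i)) b) * csgn τ' * csgn τ') * e1 +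
            (G φ (fun i => π (Fin.castLE hkn i)) a *
              (starRingEnd ℂ) (G φ (fun i => π (Fin.castLE hkn i)) b)) * e2
        · rw [if_neg hcd]
          simp
    _ = (∑ π' : Perm (Fin n),
          if ∀ i, π (Fin.castLE hkn (τ i)) = π' (Fin.castLE hkn (τ' i)) then (1:ℂ) else 0) *
            (G φ (fun i => π (Fin.castLE hkn i)) a *
              (starRingEnd ℂ) (G φ (fun i => π (Fin.castLE hkn i)) b)) :=
        (Finset.sum_mul _ _ _).symm
    _ = _ := by rw [count_cond hkn π τ τ']


set_option maxHeartbeats 2000000 in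
lemma rho_sq (hkn : k ≤ n) {φ : Fin n → (Fin d → ℂ)}
    (hφ : ∀ i j, (∑ a, (starRingEnd ℂ) (φ i a) * φ j a) = if i = j then 1 else 0) :
    ptraceLast hkn (outer (slater φ)) * ptraceLast hkn (outer (slater φ))
      = ((n.choose k : ℂ))⁻¹ • ptraceLast hkn (outer (slater φ)) := by
  have hn0 : (n.factorial : ℂ) ≠ 0 := Nat.cast_ne_zero.mpr (Nat.factorial_ne_zero n)
  have hk0 : (k.factorial : ℂ) ≠ 0 := Nat.cast_ne_zero.mpr (Nat.factorial_ne_zero k)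
  have hnk0 : ((n - k).factorial : ℂ) ≠ 0 := Nat.cast_ne_zero.mpr (Nat.factorial_ne_zero _)
  have hC0 : ((n.choose k : ℕ) : ℂ) ≠ 0 := Nat.cast_ne_zero.mpr (Nat.choose_pos hkn).ne'
  have hcast : ((n.choose k : ℕ) : ℂ) * (k.factorial : ℂ) * ((n - k).factorial : ℂ)
      = (n.factorial : ℂ) := by
    exact_mod_cast congrArg (Nat.cast : ℕ → ℂ) (Nat.choose_mul_factorial_mul_factorial hkn)
  have hs2 : (((n.factorial : ℂ) * (k.factorial : ℂ))⁻¹ *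
        ((k.factorial : ℂ) * ((k.factorial : ℂ) * (((n - k).factorial : ℂ)))))
      = ((n.choose k : ℂ))⁻¹ := by
    field_simp
    linear_combination hcast
  ext a b
  rw [Matrix.mul_apply, Matrix.smul_apply, smul_eq_mul]
  calc (∑ x : Fin k → Fin d,
        ptraceLast hkn (outer (slater φ)) a x * ptraceLast hkn (outer (slater φ)) x b)
      = ∑ x : Fin k → Fin d,
          (((n.factorial : ℂ) * (k.factorial : ℂ))⁻¹ *
              ((n.factorial : ℂ) * (k.factorial : ℂ))⁻¹) *
            ∑ π : Perm (Fin n), ∑ π' : Perm (Fin n),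
              (G φ (fun i => π (Fin.castLE hkn i)) a *
                  (starRingEnd ℂ) (G φ (fun i => π (Fin.castLE hkn i)) x)) *
                (G φ (fun i => π' (Fin.castLE hkn i)) x *
                  (starRingEnd ℂ) (G φ (fun i => π' (Fin.castLE hkn i)) b)) := by
        refine Finset.sum_congr rfl fun x _ => ?_
        rw [rho_eq hkn hφ a x, rho_eq hkn hφ x b, mul_mul_mul_comm, Fintype.sum_mul_sum]
    _ = (((n.factorial : ℂ) * (k.factorial : ℂ))⁻¹ *
            ((n.factorial : ℂ) * (k.factorial : ℂ))⁻¹) *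
          ∑ π : Perm (Fin n), ∑ π' : Perm (Fin n),
            (G φ (fun i => π (Fin.castLE hkn i)) a *
                (starRingEnd ℂ) (G φ (fun i => π' (Fin.castLE hkn i)) b)) *
              ∑ x : Fin k → Fin d,
                (starRingEnd ℂ) (G φ (fun i => π (Fin.castLE hkn i)) x) *
                  G φ (fun i => π' (Fin.castLE hkn i)) x := by
        rw [← Finset.mul_sum]
        congr 1
        rw [Finset.sum_comm]
        refine Finset.sum_congr rfl fun π _ => ?_
        rw [Finset.sum_comm]
        refine Finset.sum_congr rfl fun π' _ => ?_
        rw [Finset.mul_sum]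
        refine Finset.sum_congr rfl fun x _ => ?_
        ring
    _ = (((n.factorial : ℂ) * (k.factorial : ℂ))⁻¹ *
            ((n.factorial : ℂ) * (k.factorial : ℂ))⁻¹) *
          ∑ π : Perm (Fin n), ∑ π' : Perm (Fin n),
            (G φ (fun i => π (Fin.castLE hkn i)) a *
                (starRingEnd ℂ) (G φ (fun i => π' (Fin.castLE hkn i)) b)) *
              ∑ τ : Perm (Fin k), ∑ τ' : Perm (Fin k),
                csgn τ * csgn τ' *
                  (if ∀ i, π (Fin.castLE hkn (τ i)) = π' (Fin.castLE hkn (τ' i))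
                    then (1:ℂ) else 0) := by
        congr 1
        refine Finset.sum_congr rfl fun π _ => Finset.sum_congr rfl fun π' _ => ?_
        rw [gram hφ]
    _ = (((n.factorial : ℂ) * (k.factorial : ℂ))⁻¹ *
            ((n.factorial : ℂ) * (k.factorial : ℂ))⁻¹) *
          ∑ π : Perm (Fin n), ∑ τ : Perm (Fin k), ∑ τ' : Perm (Fin k),
            ∑ π' : Perm (Fin n),
              (G φ (fun i => π (Fin.castLE hkn i)) a *
                  (starRingEnd ℂ) (G φ (fun i => π' (Fin.castLE hkn i)) b)) *
                (csgn τ * csgn τ' *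
                  (if ∀ i, π (Fin.castLE hkn (τ i)) = π' (Fin.castLE hkn (τ' i))
                    then (1:ℂ) else 0)) := by
        congr 1
        refine Finset.sum_congr rfl fun π _ => ?_
        calc (∑ π' : Perm (Fin n),
              (G φ (fun i => π (Fin.castLE hkn i)) a *
                  (starRingEnd ℂ) (G φ (fun i => π' (Fin.castLE hkn i)) b)) *
                ∑ τ : Perm (Fin k), ∑ τ' : Perm (Fin k),
                  csgn τ * csgn τ' *
                    (if ∀ i, π (Fin.castLE hkn (τ i)) = π' (Fin.castLE hkn (τ' i))
                      then (1:ℂ) else 0))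
            = ∑ π' : Perm (Fin n), ∑ τ : Perm (Fin k), ∑ τ' : Perm (Fin k),
                (G φ (fun i => π (Fin.castLE hkn i)) a *
                    (starRingEnd ℂ) (G φ (fun i => π' (Fin.castLE hkn i)) b)) *
                  (csgn τ * csgn τ' *
                    (if ∀ i, π (Fin.castLE hkn (τ i)) = π' (Fin.castLE hkn (τ' i))
                      then (1:ℂ) else 0)) := by
              refine Finset.sum_congr rfl fun π' _ => ?_
              rw [Finset.mul_sum]
              refine Finset.sum_congr rfl fun τ _ => ?_
              rw [Finset.mul_sum]
          _ = ∑ τ : Perm (Fin k), ∑ π' : Perm (Fin n), ∑ τ' : Perm (Fin k),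
                (G φ (fun i => π (Fin.castLE hkn i)) a *
                    (starRingEnd ℂ) (G φ (fun i => π' (Fin.castLE hkn i)) b)) *
                  (csgn τ * csgn τ' *
                    (if ∀ i, π (Fin.castLE hkn (τ i)) = π' (Fin.castLE hkn (τ' i))
                      then (1:ℂ) else 0)) := Finset.sum_comm
          _ = ∑ τ : Perm (Fin k), ∑ τ' : Perm (Fin k), ∑ π' : Perm (Fin n),
                (G φ (fun i => π (Fin.castLE hkn i)) a *
                    (starRingEnd ℂ) (G φ (fun i => π' (Fin.castLE hkn i)) b)) *
                  (csgn τ * csgn τ' *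
                    (if ∀ i, π (Fin.castLE hkn (τ i)) = π' (Fin.castLE hkn (τ' i))
                      then (1:ℂ) else 0)) :=
              Finset.sum_congr rfl fun τ _ => Finset.sum_comm
    _ = (((n.factorial : ℂ) * (k.factorial : ℂ))⁻¹ *
            ((n.factorial : ℂ) * (k.factorial : ℂ))⁻¹) *
          ∑ π : Perm (Fin n), ∑ τ : Perm (Fin k), ∑ τ' : Perm (Fin k),
            (((n - k).factorial : ℂ)) *
              (G φ (fun i => π (Fin.castLE hkn i)) a *
                (starRingEnd ℂ) (G φ (fun i => π (Fin.castLE hkn i)) b)) := by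
        congr 1
        refine Finset.sum_congr rfl fun π _ => Finset.sum_congr rfl fun τ _ =>
          Finset.sum_congr rfl fun τ' _ => ?_
        exact inner_sum_pi' hkn φ π τ τ' a b
    _ = (((n.factorial : ℂ) * (k.factorial : ℂ))⁻¹ *
            ((n.factorial : ℂ) * (k.factorial : ℂ))⁻¹) *
          ∑ π : Perm (Fin n),
            (k.factorial : ℂ) * ((k.factorial : ℂ) * ((((n - k).factorial : ℂ)) *
              (G φ (fun i => π (Fin.castLE hkn i)) a *
                (starRingEnd ℂ) (G φ (fun i => π (Fin.castLE hkn i)) b)))) := by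
        congr 1
        refine Finset.sum_congr rfl fun π _ => ?_
        calc (∑ τ : Perm (Fin k), ∑ τ' : Perm (Fin k),
              (((n - k).factorial : ℂ)) *
                (G φ (fun i => π (Fin.castLE hkn i)) a *
                  (starRingEnd ℂ) (G φ (fun i => π (Fin.castLE hkn i)) b)))
            = ∑ τ : Perm (Fin k),
                (k.factorial : ℂ) * ((((n - k).factorial : ℂ)) *
                  (G φ (fun i => π (Fin.castLE hkn i)) a *
                    (starRingEnd ℂ) (G φ (fun i => π (Fin.castLE hkn i)) b))) := by
              refine Finset.sum_congr rfl fun τ _ => ?_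
              rw [Finset.sum_const, Finset.card_univ, Fintype.card_perm, Fintype.card_fin,
                nsmul_eq_mul]
          _ = (k.factorial : ℂ) * ((k.factorial : ℂ) * ((((n - k).factorial : ℂ)) *
                (G φ (fun i => π (Fin.castLE hkn i)) a *
                  (starRingEnd ℂ) (G φ (fun i => π (Fin.castLE hkn i)) b)))) := by
              rw [Finset.sum_const, Finset.card_univ, Fintype.card_perm, Fintype.card_fin,
                nsmul_eq_mul]
    _ = ((n.choose k : ℂ))⁻¹ * (((n.factorial : ℂ) * (k.factorial : ℂ))⁻¹ *
          ∑ π : Perm (Fin n), G φ (fun i => π (Fin.castLE hkn i)) a *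
            (starRingEnd ℂ) (G φ (fun i => π (Fin.castLE hkn i)) b)) := by
        rw [← Finset.mul_sum, ← Finset.mul_sum, ← Finset.mul_sum]
        rw [show (((n.factorial : ℂ) * (k.factorial : ℂ))⁻¹ *
              ((n.factorial : ℂ) * (k.factorial : ℂ))⁻¹) *
            ((k.factorial : ℂ) * ((k.factorial : ℂ) * ((((n - k).factorial : ℂ)) *
              (∑ π : Perm (Fin n), G φ (fun i => π (Fin.castLE hkn i)) a *
                (starRingEnd ℂ) (G φ (fun i => π (Fin.castLE hkn i)) b)))))
          = (((n.factorial : ℂ) * (k.factorial : ℂ))⁻¹ *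
              ((k.factorial : ℂ) * ((k.factorial : ℂ) * (((n - k).factorial : ℂ))))) *
            (((n.factorial : ℂ) * (k.factorial : ℂ))⁻¹ *
              (∑ π : Perm (Fin n), G φ (fun i => π (Fin.castLE hkn i)) a *
                (starRingEnd ℂ) (G φ (fun i => π (Fin.castLE hkn i)) b))) from by ring]
        rw [hs2]
    _ = ((n.choose k : ℂ))⁻¹ * ptraceLast hkn (outer (slater φ)) a b := by
        rw [← rho_eq hkn hφ a b]

lemma rho_herm (hkn : k ≤ n) (φ : Fin n → (Fin d → ℂ)) :
    (ptraceLast hkn (outer (slater φ))).IsHermitian := by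
  show _ᴴ = _
  ext a b
  rw [Matrix.conjTranspose_apply, ptraceLast_apply, ptraceLast_apply, star_sum]
  refine Finset.sum_congr rfl fun z _ => ?_
  show star (slater φ (glue hkn b z) * (starRingEnd ℂ) (slater φ (glue hkn a z)))
    = slater φ (glue hkn a z) * (starRingEnd ℂ) (slater φ (glue hkn b z))
  rw [star_mul']
  simp only [RCLike.star_def]
  rw [Complex.conj_conj, mul_comm]

lemma vnEntropy_of_proj {N : Type*} [Fintype N] [DecidableEq N] (ρ : Matrix N N ℂ) (c : ℝ)
    (hc : 0 < c) (hherm : ρ.IsHermitian) (hsq : ρ * ρ = (c : ℂ) • ρ) (htr : ρ.trace = 1) :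
    vnEntropy ρ = - Real.log c := by
  classical
  have hspec : ρ = (hherm.eigenvectorUnitary : Matrix N N ℂ) *
      Matrix.diagonal (RCLike.ofReal ∘ hherm.eigenvalues) *
      star (hherm.eigenvectorUnitary : Matrix N N ℂ) := hherm.spectral_theorem
  have hU2 : star (hherm.eigenvectorUnitary : Matrix N N ℂ) *
      (hherm.eigenvectorUnitary : Matrix N N ℂ) = 1 :=
    (Matrix.mem_unitaryGroup_iff').mp (hherm.eigenvectorUnitary).2
  set U : Matrix N N ℂ := (hherm.eigenvectorUnitary : Matrix N N ℂ) with hUdef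
  set D : Matrix N N ℂ := Matrix.diagonal (RCLike.ofReal ∘ hherm.eigenvalues) with hDdef
  have key : ∀ X Y : Matrix N N ℂ, U * X * star U = U * Y * star U → X = Y := by
    intro X Y h
    have h2 := congrArg (fun M => star U * M * U) h
    calc X = (star U * U) * X * (star U * U) := by rw [hU2, one_mul, mul_one]
      _ = star U * (U * X * star U) * U := by noncomm_ring
      _ = star U * (U * Y * star U) * U := by rw [h]
      _ = (star U * U) * Y * (star U * U) := by noncomm_ring
      _ = Y := by rw [hU2, one_mul, mul_one]
  have hDD : D * D = (c : ℂ) • D := by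
    refine key _ _ ?_
    calc U * (D * D) * star U
        = (U * D * star U) * (U * D * star U) := by
          rw [show (U * D * star U) * (U * D * star U)
            = U * D * (star U * U) * D * star U from by noncomm_ring, hU2]
          noncomm_ring
      _ = ρ * ρ := by rw [← hspec]
      _ = (c : ℂ) • ρ := hsq
      _ = U * ((c : ℂ) • D) * star U := by
          rw [hspec]
          rw [Matrix.mul_smul, Matrix.smul_mul]
  have hev : ∀ i, hherm.eigenvalues i = 0 ∨ hherm.eigenvalues i = c := by
    intro i
    have h1 := congr_fun (congr_fun hDD i) i
    rw [hDdef] at h1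
    rw [Matrix.diagonal_mul_diagonal] at h1
    simp only [Matrix.smul_apply, Matrix.diagonal_apply_eq, Function.comp_apply,
      smul_eq_mul] at h1
    have h2 : hherm.eigenvalues i * hherm.eigenvalues i = c * hherm.eigenvalues i := by
      have h1' : ((hherm.eigenvalues i * hherm.eigenvalues i : ℝ) : ℂ)
          = ((c * hherm.eigenvalues i : ℝ) : ℂ) := by push_cast; exact h1
      exact_mod_cast h1'
    have h3 : hherm.eigenvalues i * (hherm.eigenvalues i - c) = 0 := by linear_combination h2
    rcases mul_eq_zero.mp h3 with h | h
    · left; exact h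
    · right; exact sub_eq_zero.mp h
  have hlog : matLog ρ = ((Real.log c / c : ℝ) : ℂ) • ρ := by
    have hdiag : Matrix.diagonal (fun i => ((Real.log (hherm.eigenvalues i) : ℝ) : ℂ))
        = ((Real.log c / c : ℝ) : ℂ) • D := by
      rw [hDdef, ← Matrix.diagonal_smul]
      refine congrArg Matrix.diagonal (funext fun i => ?_)
      simp only [Pi.smul_apply, Function.comp_apply, smul_eq_mul]
      rcases hev i with h | h
      · rw [h]; simp
      · rw [h]
        have hcoe : (RCLike.ofReal c : ℂ) = ((c : ℝ) : ℂ) := rfl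
        rw [hcoe, ← Complex.ofReal_mul, div_mul_cancel₀ _ (ne_of_gt hc)]
    calc matLog ρ
        = U * Matrix.diagonal (fun i => ((Real.log (hherm.eigenvalues i) : ℝ) : ℂ)) * star U := by
          simp only [matLog, hermFun, dif_pos hherm]
          rfl
      _ = ((Real.log c / c : ℝ) : ℂ) • ρ := by
          rw [hdiag, Matrix.mul_smul, Matrix.smul_mul, ← hspec]
  rw [vnEntropy, hlog, Matrix.mul_smul, hsq, smul_smul, Matrix.trace_smul, htr, smul_eq_mul,
    mul_one, ← Complex.ofReal_mul, div_mul_cancel₀ _ (ne_of_gt hc), Complex.ofReal_re]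

end SlaterPf



/-- The quantum entropy of the `k`-particle marginal of a Slater determinant of `n`
orthonormal vectors is `log C(n,k)`. -/
theorem entropy_ptrace_slater
    (d k n : ℕ) (hk : 1 ≤ k) (hkn : k ≤ n) (hnd : n ≤ d)
    (φ : Fin n → (Fin d → ℂ))
    (hφ : ∀ i j, (∑ a, (starRingEnd ℂ) (φ i a) * φ j a) = if i = j then 1 else 0) :
    vnEntropy (ptraceLast hkn (outer (slater φ))) = Real.log (n.choose k) := by
  have hCpos : (0:ℝ) < ((n.choose k : ℕ) : ℝ) := by
    exact_mod_cast Nat.choose_pos hkn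
  have hc : (0:ℝ) < (((n.choose k : ℕ) : ℝ))⁻¹ := by positivity
  have hco : (((((n.choose k : ℕ) : ℝ))⁻¹ : ℝ) : ℂ) = ((n.choose k : ℂ))⁻¹ := by
    push_cast
    ring
  have hsq : ptraceLast hkn (outer (slater φ)) * ptraceLast hkn (outer (slater φ))
      = ((((((n.choose k : ℕ) : ℝ))⁻¹ : ℝ) : ℂ)) • ptraceLast hkn (outer (slater φ)) := by
    rw [rho_sq hkn hφ, hco]
  have hmain := vnEntropy_of_proj (ptraceLast hkn (outer (slater φ)))
    (((n.choose k : ℕ) : ℝ))⁻¹ hc (rho_herm hkn φ) hsq (trace_rho hkn hφ)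
  rw [hmain, Real.log_inv, neg_neg]
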